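/- Let a > 1, κ > 0, μ := sqrt(aκ)/sqrt(aκ+1), and φ(θ) := θ − (1/κ + 1) μ arctan(μ tan θ) for θ ∈ (−π/2, π/2). Then φ is strictly decreasing (or strictly monotone) and the length of its range, lim_{θ→−π/2} φ(θ) − lim_{θ→π/2} φ(θ), equals π(μ(1 + 1/κ) − 1). -/

import Mathlib

open Real Filter Set Topology

theorem aronsson_phi_monotone_and_range (a κ : ℝ) (ha : 1 < a) (hκ : 0 < κ)
    (μ : ℝ) (hμ : μ = Real.sqrt (a*κ) / Real.sqrt (a*κ + 1))
    (φ : ℝ → ℝ)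
    (hφ : ∀ θ, φ θ = θ - (1/κ + 1) * μ * Real.arctan (μ * Real.tan θ)) :
    StrictAntiOn φ (Set.Ioo (-(Real.pi/2)) (Real.pi/2)) ∧
    ∃ A B : ℝ,
      Filter.Tendsto φ (nhdsWithin (-(Real.pi/2)) (Set.Ioi (-(Real.pi/2)))) (nhds A) ∧
      Filter.Tendsto φ (nhdsWithin (Real.pi/2) (Set.Iio (Real.pi/2))) (nhds B) ∧
      A - B = Real.pi * (μ * (1 + 1/κ) - 1) := by
  have haκ : 0 < a * κ := mul_pos (by linarith) hκ
  have haκ1 : 0 < a * κ + 1 := by linarith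
  have hμ2 : μ ^ 2 = a * κ / (a * κ + 1) := by
    rw [hμ, div_pow, Real.sq_sqrt haκ.le, Real.sq_sqrt haκ1.le]
  have hμpos : 0 < μ := by
    rw [hμ]
    exact div_pos (Real.sqrt_pos.2 haκ) (Real.sqrt_pos.2 haκ1)
  have hμlt : μ ^ 2 < 1 := by
    rw [hμ2, div_lt_one haκ1]; linarith
  set c : ℝ := (1 / κ + 1) * μ with hc
  have hcμ : 1 < c * μ := by
    have h1 : c * μ = (1 / κ + 1) * (a * κ / (a * κ + 1)) := by
      rw [hc, mul_assoc, ← sq, hμ2]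
    have h2 : (1 / κ + 1) * (a * κ / (a * κ + 1)) = a * (κ + 1) / (a * κ + 1) := by
      field_simp; ring
    rw [h1, h2, lt_div_iff₀ haκ1]; nlinarith
  have hderiv : ∀ θ ∈ Set.Ioo (-(Real.pi/2)) (Real.pi/2),
      HasDerivAt φ (1 - c * (1 / (1 + (μ * Real.tan θ) ^ 2) * (μ * (1 / Real.cos θ ^ 2)))) θ := by
    intro θ hθ
    have hcos : Real.cos θ ≠ 0 :=
      ne_of_gt (Real.cos_pos_of_mem_Ioo (by simpa using hθ))
    have h1 : HasDerivAt (fun x => μ * Real.tan x) (μ * (1 / Real.cos θ ^ 2)) θ :=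
      (Real.hasDerivAt_tan hcos).const_mul μ
    have h2 : HasDerivAt (fun x => Real.arctan (μ * Real.tan x))
        (1 / (1 + (μ * Real.tan θ) ^ 2) * (μ * (1 / Real.cos θ ^ 2))) θ :=
      h1.arctan
    have h3 : HasDerivAt (fun x => x - c * Real.arctan (μ * Real.tan x))
        (1 - c * (1 / (1 + (μ * Real.tan θ) ^ 2) * (μ * (1 / Real.cos θ ^ 2)))) θ :=
      (hasDerivAt_id θ).sub (h2.const_mul c)
    exact h3.congr_of_eventuallyEq (Filter.Eventually.of_forall fun x => by
      rw [hφ x])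
  have hneg : ∀ θ ∈ Set.Ioo (-(Real.pi/2)) (Real.pi/2),
      1 - c * (1 / (1 + (μ * Real.tan θ) ^ 2) * (μ * (1 / Real.cos θ ^ 2))) < 0 := by
    intro θ hθ
    have hcospos : 0 < Real.cos θ := Real.cos_pos_of_mem_Ioo (by simpa using hθ)
    have hcos : Real.cos θ ≠ 0 := ne_of_gt hcospos
    have hden : 0 < 1 + (μ * Real.tan θ) ^ 2 := by positivity
    have hsc : Real.sin θ ^ 2 + Real.cos θ ^ 2 = 1 := Real.sin_sq_add_cos_sq θ
    have htan : Real.tan θ = Real.sin θ / Real.cos θ := Real.tan_eq_sin_div_cos θ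
    have hkey : (1 + (μ * Real.tan θ) ^ 2) * Real.cos θ ^ 2 < c * μ := by
      have h1 : (1 + (μ * Real.tan θ) ^ 2) * Real.cos θ ^ 2
          = Real.cos θ ^ 2 + μ ^ 2 * Real.sin θ ^ 2 := by
        rw [htan]; field_simp
      rw [h1]
      nlinarith [sq_nonneg (Real.sin θ)]
    have h2 : c * (1 / (1 + (μ * Real.tan θ) ^ 2) * (μ * (1 / Real.cos θ ^ 2)))
        = c * μ / ((1 + (μ * Real.tan θ) ^ 2) * Real.cos θ ^ 2) := by
      field_simp
    have h3 : 1 < c * μ / ((1 + (μ * Real.tan θ) ^ 2) * Real.cos θ ^ 2) :=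
      (one_lt_div (by positivity)).2 hkey
    rw [h2]; linarith
  constructor
  · apply strictAntiOn_of_deriv_neg (convex_Ioo _ _)
    · exact fun x hx => ((hderiv x hx).continuousAt).continuousWithinAt
    · intro x hx
      rw [interior_Ioo] at hx
      rw [(hderiv x hx).deriv]
      exact hneg x hx
  · refine ⟨-(Real.pi/2) + c * (Real.pi/2), Real.pi/2 - c * (Real.pi/2), ?_, ?_, ?_⟩
    · have htan : Filter.Tendsto Real.tan (𝓝[>] (-(Real.pi/2))) atBot :=
        Real.tendsto_tan_neg_pi_div_two
      have hmul : Filter.Tendsto (fun θ => μ * Real.tan θ) (𝓝[>] (-(Real.pi/2))) atBot :=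
        Filter.Tendsto.const_mul_atBot hμpos htan
      have harc : Filter.Tendsto (fun θ => Real.arctan (μ * Real.tan θ))
          (𝓝[>] (-(Real.pi/2))) (𝓝 (-(Real.pi/2))) :=
        tendsto_nhds_of_tendsto_nhdsWithin (Real.tendsto_arctan_atBot.comp hmul)
      have hid : Filter.Tendsto (fun θ : ℝ => θ) (𝓝[>] (-(Real.pi/2))) (𝓝 (-(Real.pi/2))) :=
        tendsto_nhdsWithin_of_tendsto_nhds tendsto_id
      have heq : -(Real.pi/2) + c * (Real.pi/2) = -(Real.pi/2) - c * -(Real.pi/2) := by ring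
      rw [heq]
      exact (hid.sub (harc.const_mul c)).congr fun x => (hφ x).symm
    · have htan : Filter.Tendsto Real.tan (𝓝[<] (Real.pi/2)) atTop :=
        Real.tendsto_tan_pi_div_two
      have hmul : Filter.Tendsto (fun θ => μ * Real.tan θ) (𝓝[<] (Real.pi/2)) atTop :=
        Filter.Tendsto.const_mul_atTop hμpos htan
      have harc : Filter.Tendsto (fun θ => Real.arctan (μ * Real.tan θ))
          (𝓝[<] (Real.pi/2)) (𝓝 (Real.pi/2)) :=
        tendsto_nhds_of_tendsto_nhdsWithin (Real.tendsto_arctan_atTop.comp hmul)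
      have hid : Filter.Tendsto (fun θ : ℝ => θ) (𝓝[<] (Real.pi/2)) (𝓝 (Real.pi/2)) :=
        tendsto_nhdsWithin_of_tendsto_nhds tendsto_id
      exact (hid.sub (harc.const_mul c)).congr fun x => (hφ x).symm
    · rw [hc]; ring
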